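/- (Van Loan's lemma, constant-coefficient version.) For constant matrices A (m×m), C (n×n), B (m×n) and t ≥ 0, exp(t·[[A,B],[0,C]]) = [[exp(tA), ∫_0^t exp(uA) B exp((t−u)C) du],[0, exp(tC)]]. -/

import Mathlib

open Matrix MeasureTheory

attribute [local instance] Matrix.linftyOpNormedAddCommGroup Matrix.linftyOpNormedSpace
  Matrix.linftyOpNormedRing Matrix.linftyOpNormedAlgebra

namespace VanLoanAux

variable (m n : ℕ)

/-- The block-diagonal embedding as an algebra hom. -/
noncomputable def φ :
    (Matrix (Fin m) (Fin m) ℝ × Matrix (Fin n) (Fin n) ℝ) →ₐ[ℝ]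
      Matrix (Fin m ⊕ Fin n) (Fin m ⊕ Fin n) ℝ where
  toFun p := Matrix.fromBlocks p.1 0 0 p.2
  map_one' := by simp [← Matrix.fromBlocks_one]
  map_mul' p q := by simp [Matrix.fromBlocks_multiply]
  map_zero' := by simp
  map_add' p q := by simp [Matrix.fromBlocks_add]
  commutes' r := by
    simp only [Algebra.algebraMap_eq_smul_one, Prod.smul_def, Prod.fst_one, Prod.snd_one]
    rw [← Matrix.fromBlocks_one, Matrix.fromBlocks_smul]
    simp

theorem φ_continuous : Continuous (φ m n) :=
  (φ m n).toLinearMap.continuous_of_finiteDimensional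

/-- Embedding of the top-right block. -/
noncomputable def ι : Matrix (Fin m) (Fin n) ℝ →L[ℝ]
    Matrix (Fin m ⊕ Fin n) (Fin m ⊕ Fin n) ℝ :=
  LinearMap.toContinuousLinearMap
    { toFun := fun B => Matrix.fromBlocks 0 B 0 0
      map_add' := fun x y => by rw [Matrix.fromBlocks_add]; simp
      map_smul' := fun r x => by rw [Matrix.fromBlocks_smul]; simp }

/-- Projection onto the top-right block. -/
noncomputable def π : Matrix (Fin m ⊕ Fin n) (Fin m ⊕ Fin n) ℝ →L[ℝ]
    Matrix (Fin m) (Fin n) ℝ :=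
  LinearMap.toContinuousLinearMap
    { toFun := Matrix.toBlocks₁₂
      map_add' := fun x y => rfl
      map_smul' := fun r x => rfl }

@[simp] theorem ι_apply (B : Matrix (Fin m) (Fin n) ℝ) :
    ι m n B = Matrix.fromBlocks 0 B 0 0 := rfl

@[simp] theorem π_apply (X : Matrix (Fin m ⊕ Fin n) (Fin m ⊕ Fin n) ℝ) :
    π m n X = X.toBlocks₁₂ := rfl

variable {m n}

theorem exp_smul_blockDiag (A : Matrix (Fin m) (Fin m) ℝ) (C : Matrix (Fin n) (Fin n) ℝ)
    (s : ℝ) :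
    NormedSpace.exp (s • Matrix.fromBlocks A 0 0 C) =
      Matrix.fromBlocks (NormedSpace.exp (s • A)) 0 0 (NormedSpace.exp (s • C)) := by
  have h1 : s • Matrix.fromBlocks A 0 0 C = φ m n (s • A, s • C) := by
    simp [φ, Matrix.fromBlocks_smul]
  erw [h1, ← NormedSpace.map_exp (φ m n) (φ_continuous m n)]
  have h2 : NormedSpace.exp ((s • A, s • C) :
      Matrix (Fin m) (Fin m) ℝ × Matrix (Fin n) (Fin n) ℝ) =
      (NormedSpace.exp (s • A), NormedSpace.exp (s • C)) := by
    exact Prod.ext (Prod.fst_exp _) (Prod.snd_exp _)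
  erw [h2]
  rfl

end VanLoanAux

open VanLoanAux

theorem exp_fromBlocks_van_loan {m n : ℕ}
    (A : Matrix (Fin m) (Fin m) ℝ) (B : Matrix (Fin m) (Fin n) ℝ)
    (C : Matrix (Fin n) (Fin n) ℝ) (t : ℝ) (ht : 0 ≤ t) :
    NormedSpace.exp (t • Matrix.fromBlocks A B 0 C) =
      Matrix.fromBlocks (NormedSpace.exp (t • A))
        (∫ u in (0:ℝ)..t,
          NormedSpace.exp (u • A) * B * NormedSpace.exp ((t - u) • C))
        0 (NormedSpace.exp (t • C)) := by
  set D : Matrix (Fin m ⊕ Fin n) (Fin m ⊕ Fin n) ℝ := Matrix.fromBlocks A 0 0 C with hD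
  set N : Matrix (Fin m ⊕ Fin n) (Fin m ⊕ Fin n) ℝ := Matrix.fromBlocks 0 B 0 0 with hN
  have hDN : Matrix.fromBlocks A B 0 C = D + N := by
    rw [hD, hN, Matrix.fromBlocks_add]; simp
  -- the integrand in the big algebra
  set h : ℝ → Matrix (Fin m ⊕ Fin n) (Fin m ⊕ Fin n) ℝ :=
    fun u => NormedSpace.exp (u • D) * N * NormedSpace.exp ((-u) • D) with hh
  have hcont : Continuous h := by
    apply Continuous.mul
    apply Continuous.mul
    · exact NormedSpace.exp_continuous.comp (continuous_id.smul continuous_const)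
    · exact continuous_const
    · exact NormedSpace.exp_continuous.comp (continuous_neg.smul continuous_const)
  have hint : ∀ a b : ℝ, @IntervalIntegrable _ _ NormedAddCommGroup.toENormedAddCommMonoid.toENormedAddMonoid h volume a b := fun a b =>
    hcont.intervalIntegrable a b
  set W : ℝ → Matrix (Fin m ⊕ Fin n) (Fin m ⊕ Fin n) ℝ :=
    fun s => ∫ u in (0:ℝ)..s, h u with hW
  have hWderiv : ∀ s, HasDerivAt W (h s) s := by
    intro s
    exact intervalIntegral.integral_hasDerivAt_right (hint 0 s)
      ⟨Set.univ, Filter.univ_mem, (show @Continuous ℝ _ _ PseudoMetricSpace.toUniformSpace.toTopologicalSpace h from hcont).aestronglyMeasurable.restrict⟩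
      hcont.continuousAt
  -- cancellation of exponentials
  have hcancel : ∀ (X : Matrix (Fin m ⊕ Fin n) (Fin m ⊕ Fin n) ℝ) (s : ℝ),
      NormedSpace.exp ((-s) • X) * NormedSpace.exp (s • X) = 1 := by
    intro X s
    erw [← NormedSpace.exp_add_of_commute (((Commute.refl X).smul_left (-s)).smul_right s)]
    simp [← add_smul]
  set F : ℝ → Matrix (Fin m ⊕ Fin n) (Fin m ⊕ Fin n) ℝ :=
    fun s => (1 + W s) * NormedSpace.exp (s • D) with hF
  have hexpD : ∀ s : ℝ, NormedSpace.exp (s • D) =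
      Matrix.fromBlocks (NormedSpace.exp (s • A)) 0 0 (NormedSpace.exp (s • C)) :=
    fun s => exp_smul_blockDiag A C s
  have hkill : ∀ (Q : Matrix (Fin m) (Fin n) ℝ) (s : ℝ),
      ι m n Q * NormedSpace.exp (s • D) * N = 0 := by
    intro Q s
    rw [hexpD, ι_apply, hN, Matrix.fromBlocks_multiply, Matrix.fromBlocks_multiply]
    simp
  have hWblocks : ∀ s : ℝ, ι m n (π m n (W s)) = W s := by
    intro s
    have key : ∀ u : ℝ, ((ι m n).comp (π m n)) (h u) = h u := by
      intro u
      show ι m n (π m n (h u)) = h u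
      simp only [hh]
      rw [hexpD, hexpD, hN, Matrix.fromBlocks_multiply, Matrix.fromBlocks_multiply,
        π_apply, ι_apply, Matrix.toBlocks_fromBlocks₁₂]
      simp
    calc ι m n (π m n (W s)) = ((ι m n).comp (π m n)) (∫ u in (0:ℝ)..s, h u) := rfl
      _ = ∫ u in (0:ℝ)..s, ((ι m n).comp (π m n)) (h u) :=
          (((ι m n).comp (π m n)).intervalIntegral_comp_comm (hint 0 s)).symm
      _ = W s := by rw [hW]; exact intervalIntegral.integral_congr fun u _ => key u
  have hFderiv : ∀ s, HasDerivAt F (F s * (D + N)) s := by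
    intro s
    have h1 : HasDerivAt (fun y : ℝ => 1 + W y) (h s) s := (hWderiv s).const_add 1
    have h2 : HasDerivAt (fun y : ℝ => NormedSpace.exp (y • D))
        (NormedSpace.exp (s • D) * D) s := hasDerivAt_exp_smul_const D s
    have h3 := h1.mul h2
    have e1 : h s * NormedSpace.exp (s • D) = NormedSpace.exp (s • D) * N := by
      rw [hh, mul_assoc, hcancel D s, mul_one]
    have hWkill : W s * NormedSpace.exp (s • D) * N = 0 := by
      rw [← hWblocks s]; exact hkill _ s
    have e2 : F s * N = NormedSpace.exp (s • D) * N := by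
      have hFeq : F s = NormedSpace.exp (s • D) + W s * NormedSpace.exp (s • D) := by
        simp only [hF]; rw [add_mul, one_mul]
      rw [hFeq, add_mul, hWkill, add_zero]
    refine h3.congr_deriv ?_
    symm
    calc F s * (D + N) = F s * D + F s * N := by rw [mul_add]
      _ = (1 + W s) * (NormedSpace.exp (s • D) * D) + NormedSpace.exp (s • D) * N := by
          rw [e2]; simp only [hF]; rw [mul_assoc]
      _ = h s * NormedSpace.exp (s • D) + (1 + W s) * (NormedSpace.exp (s • D) * D) := by
          rw [e1, add_comm]
  have hE'deriv : ∀ s : ℝ, HasDerivAt (fun y : ℝ => NormedSpace.exp ((-y) • (D + N)))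
      (-(NormedSpace.exp ((-s) • (D + N)) * (D + N))) s := by
    intro s
    have := (hasDerivAt_exp_smul_const (𝕂 := ℝ) (D + N) (-s)).scomp s (hasDerivAt_neg s)
    simp only [Function.comp_def, neg_one_smul] at this; exact this
  have hG : ∀ s : ℝ, HasDerivAt
      (fun y : ℝ => F y * NormedSpace.exp ((-y) • (D + N))) 0 s := by
    intro s
    have h4 := (hFderiv s).mul (hE'deriv s)
    refine h4.congr_deriv ?_
    have hc : NormedSpace.exp ((-s) • (D + N)) * (D + N) =
        (D + N) * NormedSpace.exp ((-s) • (D + N)) :=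
      (((Commute.refl (D + N)).smul_left (-s)).exp_left).eq
    rw [mul_neg, hc, mul_assoc, add_neg_cancel]
  have hconst : ∀ s : ℝ, F s * NormedSpace.exp ((-s) • (D + N)) = 1 := by
    intro s
    have hdiff : Differentiable ℝ (fun y : ℝ => F y * NormedSpace.exp ((-y) • (D + N))) :=
      fun y => (hG y).differentiableAt
    have h5 := is_const_of_deriv_eq_zero hdiff (fun y => (hG y).deriv) s 0
    simpa [hF, hW, intervalIntegral.integral_same] using h5
  have hFs : NormedSpace.exp (t • (D + N)) = F t := by
    calc NormedSpace.exp (t • (D + N)) = 1 * NormedSpace.exp (t • (D + N)) := (one_mul _).symm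
      _ = F t * (NormedSpace.exp ((-t) • (D + N)) * NormedSpace.exp (t • (D + N))) := by
          rw [← hconst t, mul_assoc]
      _ = F t := by rw [hcancel (D + N) t, mul_one]
  -- identify the top-right block integral
  have hfeq : (fun u : ℝ => NormedSpace.exp (u • A) * B * NormedSpace.exp ((-u) • C))
      = fun u => π m n (h u) := by
    funext u
    simp only [hh]
    rw [hexpD, hexpD, hN, Matrix.fromBlocks_multiply, Matrix.fromBlocks_multiply,
      π_apply, Matrix.toBlocks_fromBlocks₁₂]
    simp
  have hπW : π m n (W t) = ∫ u in (0:ℝ)..t,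
      NormedSpace.exp (u • A) * B * NormedSpace.exp ((-u) • C) := by
    rw [hW]
    rw [show π m n (∫ u in (0:ℝ)..t, h u) = ∫ u in (0:ℝ)..t, π m n (h u) from
      ((π m n).intervalIntegral_comp_comm (hint 0 t)).symm]
    rw [hfeq]
  have hfInt : @IntervalIntegrable _ _ NormedAddCommGroup.toENormedAddCommMonoid.toENormedAddMonoid
      (fun u : ℝ => NormedSpace.exp (u • A) * B * NormedSpace.exp ((-u) • C))
      volume 0 t := by
    rw [hfeq]
    exact ((π m n).continuous.comp hcont).intervalIntegrable 0 t
  set ρ : Matrix (Fin m) (Fin n) ℝ →L[ℝ] Matrix (Fin m) (Fin n) ℝ :=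
    LinearMap.toContinuousLinearMap
      { toFun := fun X => X * NormedSpace.exp (t • C)
        map_add' := fun x y => Matrix.add_mul x y _
        map_smul' := fun r x => by simp [Matrix.smul_mul] } with hρ
  have hX : (∫ u in (0:ℝ)..t,
        NormedSpace.exp (u • A) * B * NormedSpace.exp ((t - u) • C))
      = (∫ u in (0:ℝ)..t, NormedSpace.exp (u • A) * B * NormedSpace.exp ((-u) • C))
        * NormedSpace.exp (t • C) := by
    have hswap := ρ.intervalIntegral_comp_comm hfInt
    calc (∫ u in (0:ℝ)..t, NormedSpace.exp (u • A) * B * NormedSpace.exp ((t - u) • C))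
        = ∫ u in (0:ℝ)..t,
            ρ (NormedSpace.exp (u • A) * B * NormedSpace.exp ((-u) • C)) := by
          refine intervalIntegral.integral_congr fun u _ => ?_
          have hsm : (t - u) • C = (-u) • C + t • C := by
            rw [← add_smul]; congr 1; ring
          erw [hsm, NormedSpace.exp_add_of_commute
            (((Commute.refl C).smul_left (-u)).smul_right t), ← Matrix.mul_assoc]
          rfl
      _ = ρ (∫ u in (0:ℝ)..t,
            NormedSpace.exp (u • A) * B * NormedSpace.exp ((-u) • C)) := hswap
      _ = _ := rfl
  rw [hDN, hFs, hX]
  have hFt : F t = NormedSpace.exp (t • D) + ι m n (π m n (W t)) * NormedSpace.exp (t • D) := by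
    simp only [hF]; rw [add_mul, one_mul, hWblocks t]
  rw [hFt, hπW, ι_apply, hexpD t, Matrix.fromBlocks_multiply, Matrix.fromBlocks_add]
  simp
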